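/- The EMAC trilinear form applied with a constant test vector vanishes: for u, w ∈ C¹(Ω̄; ℝ^d) vanishing on ∂Ω and any constant vector e ∈ ℝ^d, c(u, u, e) = 0, where c(u,v,w) = (2D(u)v, w) + ((∇·u)v, w). -/

import Mathlib

open scoped BigOperators
open MeasureTheory Set Metric

/-- Local bound on derivative near a point of the closure, from `ContDiffOn` on the closure. -/
lemma aux_loc_bound {d : ℕ} {Ω : Set (Fin d → ℝ)} (hΩo : IsOpen Ω)
    {f : (Fin d → ℝ) → ℝ} (hf : ContDiffOn ℝ 1 f (closure Ω))
    {x : Fin d → ℝ} (hx : x ∈ closure Ω) :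
    ∃ r > 0, ∃ M : ℝ, ∀ y ∈ Ω ∩ ball x r, ‖fderiv ℝ f y‖ ≤ M := by
  have h : ContDiffWithinAt ℝ ((1:ℕ) : WithTop ℕ∞) f (closure Ω) x := by
    exact_mod_cast hf x hx
  obtain ⟨v, hv, p, hp⟩ := contDiffWithinAt_nat.1 h
  rw [Set.insert_eq_of_mem hx] at hv
  obtain ⟨w, hwo, hxw, hws⟩ := mem_nhdsWithin.1 hv
  have hxv : x ∈ v := hws ⟨hxw, hx⟩
  -- continuity of `p · 1` at `x` within `v`
  have hcont : ContinuousWithinAt (fun y => p y 1) v x := (hp.cont 1 le_rfl) x hxv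
  have hev : ∀ᶠ y in nhdsWithin x v, ‖p y 1‖ < ‖p x 1‖ + 1 := by
    have : Filter.Tendsto (fun y => ‖p y 1‖) (nhdsWithin x v) (nhds ‖p x 1‖) := hcont.norm
    exact this.eventually_lt_const (by linarith)
  obtain ⟨w', hw'o, hxw', hw's⟩ := mem_nhdsWithin.1 hev
  obtain ⟨r, hr, hball⟩ := Metric.isOpen_iff.1 (hwo.inter hw'o) x ⟨hxw, hxw'⟩
  refine ⟨r, hr, ‖p x 1‖ + 1, fun y ⟨hyΩ, hyb⟩ => ?_⟩
  have hyww' := hball hyb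
  have hyv : y ∈ v := hws ⟨hyww'.1, subset_closure hyΩ⟩
  have hfd : HasFDerivWithinAt f ((continuousMultilinearCurryFin1 ℝ (Fin d → ℝ) ℝ) (p y 1)) v y :=
    hp.hasFDerivWithinAt one_ne_zero hyv
  have hmem : Ω ∩ w ∈ nhds y := (hΩo.inter hwo).mem_nhds ⟨hyΩ, hyww'.1⟩
  have hsub : Ω ∩ w ⊆ v := fun z hz => hws ⟨hz.2, subset_closure hz.1⟩
  have hfd' : HasFDerivAt f ((continuousMultilinearCurryFin1 ℝ (Fin d → ℝ) ℝ) (p y 1)) y :=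
    (hfd.mono hsub).hasFDerivAt hmem
  rw [hfd'.fderiv]
  calc ‖(continuousMultilinearCurryFin1 ℝ (Fin d → ℝ) ℝ) (p y 1)‖
      = ‖p y 1‖ := LinearIsometryEquiv.norm_map _ _
    _ ≤ ‖p x 1‖ + 1 := le_of_lt (hw's ⟨hyww'.2, hyv⟩)

/-- Global bound on the derivative over a bounded open set. -/
lemma aux_glob_bound {d : ℕ} {Ω : Set (Fin d → ℝ)} (hΩo : IsOpen Ω)
    (hΩb : Bornology.IsBounded Ω)
    {f : (Fin d → ℝ) → ℝ} (hf : ContDiffOn ℝ 1 f (closure Ω)) :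
    ∃ M : ℝ, 0 ≤ M ∧ ∀ y ∈ Ω, ‖fderiv ℝ f y‖ ≤ M := by
  have hcpt : IsCompact (closure Ω) :=
    Metric.isCompact_of_isClosed_isBounded isClosed_closure hΩb.closure
  choose! r hr M hM using fun x (hx : x ∈ closure Ω) => aux_loc_bound hΩo hf hx
  obtain ⟨t, htcl, ht⟩ := hcpt.elim_nhds_subcover (fun x => ball x (r x))
    (fun x hx => ball_mem_nhds x (hr x hx))
  refine ⟨∑ x ∈ t, |M x|, Finset.sum_nonneg (fun x _ => abs_nonneg _), fun y hy => ?_⟩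
  obtain ⟨x, hxt, hyx⟩ := Set.mem_iUnion₂.1 (ht (subset_closure hy))
  calc ‖fderiv ℝ f y‖ ≤ M x := hM x (htcl x hxt) y ⟨hy, hyx⟩
    _ ≤ |M x| := le_abs_self _
    _ ≤ ∑ x ∈ t, |M x| := Finset.single_le_sum (fun x _ => abs_nonneg (M x)) hxt

/-- Linear decay near a frontier point: if `f` vanishes on the frontier and its derivative
is bounded by `M` on `Ω`, then `‖f y‖ ≤ M * ‖y - x‖` for `y ∈ Ω` and `x ∈ frontier Ω`. -/
lemma aux_decay {d : ℕ} {Ω : Set (Fin d → ℝ)} (hΩo : IsOpen Ω)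
    {f : (Fin d → ℝ) → ℝ} (hfc : ContinuousOn f (closure Ω))
    (hfd : ∀ y ∈ Ω, DifferentiableAt ℝ f y)
    (h0 : ∀ z ∈ frontier Ω, f z = 0)
    {M : ℝ} (hM : ∀ y ∈ Ω, ‖fderiv ℝ f y‖ ≤ M)
    {x : Fin d → ℝ} (hx : x ∈ frontier Ω) :
    ∀ y ∈ Ω, ‖f y‖ ≤ M * ‖y - x‖ := by
  intro y hy
  set φ : ℝ → (Fin d → ℝ) := fun t => y + t • (x - y) with hφ
  have hφc : Continuous φ := by continuity
  have hxΩ : x ∉ Ω := (hΩo.frontier_eq ▸ hx).2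
  set T : Set ℝ := Set.Icc 0 1 ∩ φ ⁻¹' Ωᶜ with hT
  have h1T : (1:ℝ) ∈ T := by
    constructor
    · exact ⟨zero_le_one, le_rfl⟩
    · show φ 1 ∉ Ω
      simp [hφ, hxΩ]
  have hTne : T.Nonempty := ⟨1, h1T⟩
  have hTbd : BddBelow T := ⟨0, fun t ht => ht.1.1⟩
  have hTcl : IsClosed T := (isClosed_Icc).inter (hΩo.isClosed_compl.preimage hφc)
  set t₀ : ℝ := sInf T with ht₀
  have ht₀T : t₀ ∈ T := hTcl.csInf_mem hTne hTbd
  have ht₀0 : 0 < t₀ := by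
    rcases lt_or_eq_of_le ht₀T.1.1 with h | h
    · exact h
    · exfalso; apply ht₀T.2; show φ t₀ ∈ Ω; rw [← h]; simpa [hφ] using hy
  have ht₀1 : t₀ ≤ 1 := ht₀T.1.2
  have hmemΩ : ∀ t, 0 ≤ t → t < t₀ → φ t ∈ Ω := by
    intro t h0t htt₀
    by_contra hc
    exact absurd (csInf_le hTbd ⟨⟨h0t, htt₀.le.trans ht₀1⟩, hc⟩) (not_le.2 htt₀)
  -- the exit point is on the frontier
  haveI hne : (nhdsWithin t₀ (Set.Ioo 0 t₀)).NeBot := right_nhdsWithin_Ioo_neBot ht₀0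
  have hfr : φ t₀ ∈ frontier Ω := by
    rw [hΩo.frontier_eq]
    refine ⟨?_, ht₀T.2⟩
    have : Filter.Tendsto φ (nhdsWithin t₀ (Set.Ioo 0 t₀)) (nhds (φ t₀)) :=
      hφc.continuousAt.continuousWithinAt.tendsto
    refine mem_closure_of_tendsto this ?_
    filter_upwards [self_mem_nhdsWithin] with s hs
    exact hmemΩ s hs.1.le hs.2
  have hMpos : 0 ≤ M := le_trans (norm_nonneg _) (hM y hy)
  -- bound along the segment, for `s < t₀`
  have key : ∀ s ∈ Set.Ioo (0:ℝ) t₀, ‖f y - f (φ s)‖ ≤ M * ‖y - φ s‖ := by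
    intro s hs
    have hseg : segment ℝ y (φ s) ⊆ Ω := by
      rw [segment_eq_image']
      rintro z ⟨θ, hθ, rfl⟩
      show y + θ • (φ s - y) ∈ Ω
      have heq : y + θ • (φ s - y) = φ (θ * s) := by
        simp only [hφ]; rw [add_sub_cancel_left, smul_smul]
      rw [heq]
      exact hmemΩ _ (mul_nonneg hθ.1 hs.1.le)
        (lt_of_le_of_lt (by nlinarith [hθ.2, hs.1.le, hs.2] : θ * s ≤ s) hs.2)
    have := Convex.norm_image_sub_le_of_norm_fderiv_le
      (fun z hz => hfd z (hseg hz)) (fun z hz => hM z (hseg hz))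
      (convex_segment y (φ s)) (left_mem_segment ℝ y (φ s)) (right_mem_segment ℝ y (φ s))
    calc ‖f y - f (φ s)‖ = ‖f (φ s) - f y‖ := norm_sub_rev _ _
      _ ≤ M * ‖φ s - y‖ := this
      _ = M * ‖y - φ s‖ := by rw [norm_sub_rev]
  -- take the limit `s → t₀⁻`
  have htend : Filter.Tendsto (fun s => M * (s * ‖x - y‖) + ‖f (φ s)‖)
      (nhdsWithin t₀ (Set.Ioo 0 t₀)) (nhds (M * (t₀ * ‖x - y‖) + 0)) := by
    have h1 : Filter.Tendsto (fun s : ℝ => M * (s * ‖x - y‖)) (nhdsWithin t₀ (Set.Ioo 0 t₀))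
        (nhds (M * (t₀ * ‖x - y‖))) := by
      apply Filter.Tendsto.mono_left _ nhdsWithin_le_nhds
      exact (continuous_const.mul ((continuous_id.mul continuous_const))).tendsto t₀
    have h2 : Filter.Tendsto (fun s => ‖f (φ s)‖) (nhdsWithin t₀ (Set.Ioo 0 t₀)) (nhds 0) := by
      have hphi : Filter.Tendsto φ (nhdsWithin t₀ (Set.Ioo 0 t₀))
          (nhdsWithin (φ t₀) (closure Ω)) := by
        rw [tendsto_nhdsWithin_iff]
        refine ⟨hφc.continuousAt.continuousWithinAt.tendsto, ?_⟩
        filter_upwards [self_mem_nhdsWithin] with s hs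
        exact subset_closure (hmemΩ s hs.1.le hs.2)
      have := (hfc (φ t₀) hfr.1).tendsto.comp hphi
      rw [h0 _ hfr] at this
      simpa using this.norm
    exact h1.add h2
  rw [add_zero] at htend
  have hle : ‖f y‖ ≤ M * (t₀ * ‖x - y‖) := by
    refine ge_of_tendsto htend ?_
    filter_upwards [self_mem_nhdsWithin] with s hs
    have hyφ : ‖y - φ s‖ = s * ‖x - y‖ := by
      have : y - φ s = (-s) • (x - y) := by simp only [hφ]; module
      rw [this, norm_smul]
      simp [abs_of_nonneg hs.1.le]
    calc ‖f y‖ ≤ ‖f y - f (φ s)‖ + ‖f (φ s)‖ := by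
          simpa using norm_add_le (f y - f (φ s)) (f (φ s))
      _ ≤ M * ‖y - φ s‖ + ‖f (φ s)‖ := by gcongr; exact key s hs
      _ = M * (s * ‖x - y‖) + ‖f (φ s)‖ := by rw [hyφ]
  calc ‖f y‖ ≤ M * (t₀ * ‖x - y‖) := hle
    _ ≤ M * ‖x - y‖ := by nlinarith [mul_nonneg (mul_nonneg hMpos (norm_nonneg (x - y))) (sub_nonneg.2 ht₀1)]
    _ = M * ‖y - x‖ := by rw [norm_sub_rev]
lemma aux_alg {d : ℕ} (pd : Fin d → Fin d → ℝ) (uu ee : Fin d → ℝ) :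
    ∑ i, (uu i * (∑ j, ee j * pd j i) + (∑ j, uu j * ee j) * pd i i
        + (1/2 * ee i) * (∑ j, (uu j * pd j i + uu j * pd j i)))
    = (∑ i, ∑ j, (pd i j + pd j i) * uu j * ee i) + (∑ j, pd j j) * (∑ i, uu i * ee i) := by
  have h1 : ∑ i, uu i * (∑ j, ee j * pd j i) = ∑ i, ∑ j, pd i j * uu j * ee i := by
    rw [Finset.sum_comm]
    simp only [Finset.mul_sum]
    exact Finset.sum_congr rfl fun i _ => Finset.sum_congr rfl fun j _ => by ring
  have h2 : ∑ i, (1/2 * ee i) * (∑ j, (uu j * pd j i + uu j * pd j i))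
      = ∑ i, ∑ j, pd j i * uu j * ee i := by
    simp only [Finset.mul_sum]
    exact Finset.sum_congr rfl fun i _ => Finset.sum_congr rfl fun j _ => by ring
  have h3 : ∑ i, (∑ j, uu j * ee j) * pd i i = (∑ j, pd j j) * (∑ i, uu i * ee i) := by
    rw [← Finset.mul_sum, mul_comm]
  calc ∑ i, (uu i * (∑ j, ee j * pd j i) + (∑ j, uu j * ee j) * pd i i
        + (1/2 * ee i) * (∑ j, (uu j * pd j i + uu j * pd j i)))
      = (∑ i, uu i * (∑ j, ee j * pd j i)) + (∑ i, (∑ j, uu j * ee j) * pd i i)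
        + ∑ i, (1/2 * ee i) * (∑ j, (uu j * pd j i + uu j * pd j i)) := by
        rw [← Finset.sum_add_distrib, ← Finset.sum_add_distrib]
    _ = (∑ i, ∑ j, pd i j * uu j * ee i) + (∑ j, pd j j) * (∑ i, uu i * ee i)
        + ∑ i, ∑ j, pd j i * uu j * ee i := by rw [h1, h2, h3]
    _ = (∑ i, ∑ j, (pd i j + pd j i) * uu j * ee i) + (∑ j, pd j j) * (∑ i, uu i * ee i) := by
        rw [add_right_comm, ← Finset.sum_add_distrib]
        congr 1
        refine Finset.sum_congr rfl fun i _ => ?_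
        rw [← Finset.sum_add_distrib]
        exact Finset.sum_congr rfl fun j _ => by ring

noncomputable def pd3 {d : ℕ} (u : (Fin d → ℝ) → (Fin d → ℝ)) (i j : Fin d)
    (x : Fin d → ℝ) : ℝ :=
  fderiv ℝ (fun y => u y i) x (Pi.single j 1)

/-- The EMAC trilinear form `c(u,v,w) = (2D(u)v, w) + ((∇·u)v, w)`. -/
noncomputable def emacC3 {d : ℕ} (Ω : Set (Fin d → ℝ))
    (u v w : (Fin d → ℝ) → (Fin d → ℝ)) : ℝ :=
  ∫ x in Ω,
    ((∑ i, ∑ j, (pd3 u i j x + pd3 u j i x) * v x j * w x i)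
      + (∑ j, pd3 u j j x) * (∑ i, v x i * w x i))

set_option maxHeartbeats 2000000 in
theorem emac_constant_test_zero (d : ℕ)
    (Ω : Set (Fin d → ℝ)) (hΩo : IsOpen Ω) (hΩb : Bornology.IsBounded Ω)
    (u : (Fin d → ℝ) → (Fin d → ℝ))
    (hu : ∀ i, ContDiffOn ℝ 1 (fun x => u x i) (closure Ω))
    (hbc : ∀ x ∈ frontier Ω, u x = 0)
    (e : Fin d → ℝ) :
    emacC3 Ω u u (fun _ => e) = 0 := by
  classical
  rcases d with _ | n
  · simp [emacC3]
  -- notation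
  set S : (Fin (n+1) → ℝ) → ℝ := fun x => ∑ j, u x j * e j with hS
  set Q : (Fin (n+1) → ℝ) → ℝ := fun x => ∑ j, u x j * u x j with hQdef
  set F : (Fin (n+1) → ℝ) → (Fin (n+1) → ℝ) :=
    fun x i => u x i * S x + (1/2 * e i) * Q x with hF
  set G : (Fin (n+1) → ℝ) → (Fin (n+1) → ℝ) :=
    fun x => if x ∈ Ω then F x else 0 with hG
  set D : (Fin (n+1) → ℝ) → Fin (n+1) → ((Fin (n+1) → ℝ) →L[ℝ] ℝ) :=
    fun x i => fderiv ℝ (fun z => u z i) x with hD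
  set DS : (Fin (n+1) → ℝ) → ((Fin (n+1) → ℝ) →L[ℝ] ℝ) :=
    fun x => ∑ j, e j • D x j with hDS
  set DQ : (Fin (n+1) → ℝ) → ((Fin (n+1) → ℝ) →L[ℝ] ℝ) :=
    fun x => ∑ j, (u x j • D x j + u x j • D x j) with hDQ
  set DF : (Fin (n+1) → ℝ) → ((Fin (n+1) → ℝ) →L[ℝ] (Fin (n+1) → ℝ)) :=
    fun x => ContinuousLinearMap.pi
      (fun i => u x i • DS x + S x • D x i + (1/2 * e i) • DQ x) with hDF
  set G' : (Fin (n+1) → ℝ) → ((Fin (n+1) → ℝ) →L[ℝ] (Fin (n+1) → ℝ)) :=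
    fun x => if x ∈ Ω then DF x else 0 with hG'
  set g : (Fin (n+1) → ℝ) → ℝ := fun x =>
    (∑ i, ∑ j, (pd3 u i j x + pd3 u j i x) * u x j * e i)
      + (∑ j, pd3 u j j x) * (∑ i, u x i * e i) with hgdef
  -- basic differentiability facts on Ω
  have huΩ : ∀ i, ∀ y ∈ Ω, HasFDerivAt (fun z => u z i) (D y i) y := by
    intro i y hy
    have h1 : closure Ω ∈ nhds y := Filter.mem_of_superset (hΩo.mem_nhds hy) subset_closure
    exact (((hu i).contDiffAt h1).differentiableAt one_ne_zero).hasFDerivAt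
  have hSd : ∀ y ∈ Ω, HasFDerivAt S (DS y) y := fun y hy =>
    HasFDerivAt.fun_sum (fun j _ => (huΩ j y hy).mul_const (e j))
  have hQd : ∀ y ∈ Ω, HasFDerivAt Q (DQ y) y := fun y hy =>
    HasFDerivAt.fun_sum (fun j _ => (huΩ j y hy).mul (huΩ j y hy))
  have hFd : ∀ y ∈ Ω, HasFDerivAt F (DF y) y := fun y hy =>
    hasFDerivAt_pi.2 fun i => ((huΩ i y hy).mul (hSd y hy)).add ((hQd y hy).const_mul (1/2 * e i))
  -- global bounds
  obtain ⟨M, hM0, hMb⟩ : ∃ M, 0 ≤ M ∧ ∀ i, ∀ y ∈ Ω, ‖D y i‖ ≤ M := by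
    choose M₀ h0 hb using fun i => aux_glob_bound hΩo hΩb (hu i)
    refine ⟨∑ i, |M₀ i|, Finset.sum_nonneg fun i _ => abs_nonneg _, fun i y hy => ?_⟩
    exact (hb i y hy).trans ((le_abs_self _).trans
      (Finset.single_le_sum (fun j _ => abs_nonneg (M₀ j)) (Finset.mem_univ i)))
  obtain ⟨Bu, hBu0, hBu⟩ : ∃ B, 0 ≤ B ∧ ∀ x ∈ closure Ω, ∀ i, |u x i| ≤ B := by
    have hcpt : IsCompact (closure Ω) :=
      Metric.isCompact_of_isClosed_isBounded isClosed_closure hΩb.closure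
    choose C hC using fun i => hcpt.exists_bound_of_continuousOn (hu i).continuousOn
    refine ⟨∑ i, |C i|, Finset.sum_nonneg fun i _ => abs_nonneg _, fun x hx i => ?_⟩
    exact (hC i x hx).trans ((le_abs_self _).trans
      (Finset.single_le_sum (fun j _ => abs_nonneg (C j)) (Finset.mem_univ i)))
  have hu0 : ∀ x ∈ frontier Ω, ∀ i, u x i = 0 := fun x hx i => by rw [hbc x hx]; rfl
  -- linear decay of `u` near any frontier point
  have hdecay : ∀ x ∈ frontier Ω, ∀ y ∈ Ω, ∀ i, ‖u y i‖ ≤ M * ‖y - x‖ := by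
    intro x hx y hy i
    exact aux_decay hΩo (hu i).continuousOn
      (fun z hz => ((huΩ i z hz).differentiableAt))
      (fun z hz => hu0 z hz i) (hMb i) hx y hy
  -- `G` is differentiable everywhere with derivative `G'`
  have hGd : ∀ x, HasFDerivAt G (G' x) x := by
    intro x
    by_cases hx : x ∈ Ω
    · have hG'x : G' x = DF x := if_pos hx
      rw [hG'x]
      exact (hFd x hx).congr_of_eventuallyEq
        (Filter.eventuallyEq_of_mem (hΩo.mem_nhds hx) fun z hz => if_pos hz)
    · have hG'x : G' x = 0 := if_neg hx
      rw [hG'x]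
      by_cases hx' : x ∈ closure Ω
      · -- frontier case
        have hxfr : x ∈ frontier Ω := by rw [hΩo.frontier_eq]; exact ⟨hx', hx⟩
        -- show `HasFDerivAt G 0 x` via little-o
        set B : ℝ := ∑ j, |e j| with hB
        have hB0 : 0 ≤ B := Finset.sum_nonneg fun j _ => abs_nonneg _
        have heB : ∀ i, |e i| ≤ B := fun i =>
          Finset.single_le_sum (f := fun j => |e j|) (fun j _ => abs_nonneg _)
            (Finset.mem_univ i)
        set K : ℝ := M * (B + (n+1) * B) with hK
        have hK0 : 0 ≤ K := mul_nonneg hM0 (by positivity)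
        refine HasFDerivAt.of_isLittleO (Asymptotics.isLittleO_iff.2 fun c hc => ?_)
        set ε : ℝ := c / (K + 1) with hε
        have hε0 : 0 < ε := div_pos hc (by linarith)
        have hev : ∀ᶠ z in nhdsWithin x (closure Ω), ∀ j, |u z j| < ε := by
          rw [Filter.eventually_all]
          intro j
          have ht : Filter.Tendsto (fun z => u z j) (nhdsWithin x (closure Ω)) (nhds 0) := by
            have h := ((hu j).continuousOn x hx').tendsto
            rwa [hu0 x hxfr j] at h
          have := ht.norm
          rw [norm_zero] at this
          exact this.eventually_lt_const hε0
        rw [eventually_nhdsWithin_iff] at hev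
        filter_upwards [hev] with z hz
        have hGx : G x = 0 := if_neg hx
        rw [hGx]
        by_cases hzΩ : z ∈ Ω
        · have hε' : ∀ j, |u z j| ≤ ε := fun j => (hz (subset_closure hzΩ) j).le
          have hlin : ∀ j, |u z j| ≤ M * ‖z - x‖ := fun j => hdecay x hxfr z hzΩ j
          have hcomp : ∀ i, |G z i| ≤ ε * K * ‖z - x‖ := by
            intro i
            have hGz : G z i = u z i * S z + (1/2 * e i) * Q z := by
              rw [hG]; simp only [if_pos hzΩ]; rfl
            have hSb : |S z| ≤ ε * B := by
              rw [hS]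
              calc |∑ j, u z j * e j| ≤ ∑ j, |u z j * e j| := Finset.abs_sum_le_sum_abs _ _
                _ ≤ ∑ j, ε * |e j| := by
                    refine Finset.sum_le_sum fun j _ => ?_
                    rw [abs_mul]
                    exact mul_le_mul_of_nonneg_right (hε' j) (abs_nonneg _)
                _ = ε * B := by rw [hB, Finset.mul_sum]
            have hQb : |Q z| ≤ (n+1) * (ε * (M * ‖z - x‖)) := by
              rw [hQdef]
              calc |∑ j, u z j * u z j| ≤ ∑ j, |u z j * u z j| := Finset.abs_sum_le_sum_abs _ _
                _ ≤ ∑ j : Fin (n+1), ε * (M * ‖z - x‖) := by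
                    refine Finset.sum_le_sum fun j _ => ?_
                    rw [abs_mul]
                    exact mul_le_mul (hε' j) (hlin j) (abs_nonneg _) hε0.le
                _ = (n+1) * (ε * (M * ‖z - x‖)) := by
                    rw [Finset.sum_const, Finset.card_univ, Fintype.card_fin, nsmul_eq_mul]
                    push_cast; ring
            rw [hGz]
            calc |u z i * S z + (1/2 * e i) * Q z|
                ≤ |u z i * S z| + |(1/2 * e i) * Q z| := abs_add_le _ _
              _ = |u z i| * |S z| + (1/2 * |e i|) * |Q z| := by
                  rw [abs_mul, abs_mul, abs_mul]
                  norm_num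
              _ ≤ (M * ‖z - x‖) * (ε * B)
                  + (1/2 * B) * ((n+1) * (ε * (M * ‖z - x‖))) := by
                  refine add_le_add (mul_le_mul (hlin i) hSb (abs_nonneg _)
                    (by positivity)) (mul_le_mul (by linarith [heB i]) hQb (abs_nonneg _)
                    (by positivity))
              _ ≤ ε * K * ‖z - x‖ := by
                  rw [hK]
                  nlinarith [norm_nonneg (z - x), mul_nonneg (mul_nonneg hM0 (norm_nonneg (z-x))) (mul_nonneg hε0.le hB0)]
          have hnorm : ‖G z‖ ≤ ε * K * ‖z - x‖ := by
            rw [pi_norm_le_iff_of_nonneg (by positivity)]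
            intro i
            simpa using hcomp i
          have hεK : ε * K ≤ c := by
            rw [hε, div_mul_eq_mul_div, div_le_iff₀ (by linarith : (0:ℝ) < K + 1)]
            nlinarith
          calc ‖G z - 0 - (0 : (Fin (n+1) → ℝ) →L[ℝ] (Fin (n+1) → ℝ)) (z - x)‖
              = ‖G z‖ := by simp
            _ ≤ ε * K * ‖z - x‖ := hnorm
            _ ≤ c * ‖z - x‖ := mul_le_mul_of_nonneg_right hεK (norm_nonneg _)
        · have : G z = 0 := if_neg hzΩ
          rw [this]
          simp only [sub_zero, ContinuousLinearMap.zero_apply, sub_zero]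
          rw [norm_zero]
          positivity
      · -- exterior case
        have hmem : (closure Ω)ᶜ ∈ nhds x := isClosed_closure.isOpen_compl.mem_nhds hx'
        have : G =ᶠ[nhds x] fun _ => 0 := Filter.eventuallyEq_of_mem hmem
          (fun z hz => if_neg (fun h => hz (subset_closure h)))
        exact (hasFDerivAt_const (0 : Fin (n+1) → ℝ) x).congr_of_eventuallyEq this
  -- continuity of `G`
  have hGc : Continuous G := continuous_iff_continuousAt.2 fun x => (hGd x).continuousAt
  -- pointwise divergence identity
  have hdivG : ∀ x, (∑ i, G' x (Pi.single i 1) i) = Set.indicator Ω g x := by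
    intro x
    by_cases hx : x ∈ Ω
    · rw [Set.indicator_of_mem hx]
      have hGx : G' x = DF x := if_pos hx
      rw [hGx, hgdef]
      have expand : ∀ i : Fin (n+1), DF x (Pi.single i 1) i
          = u x i * (∑ j, e j * (D x j (Pi.single i 1)))
            + S x * (D x i (Pi.single i 1))
            + (1/2 * e i) * (∑ j, (u x j * (D x j (Pi.single i 1))
                + u x j * (D x j (Pi.single i 1)))) := by
        intro i
        rw [hDF]
        simp only [ContinuousLinearMap.pi_apply, ContinuousLinearMap.add_apply,
          ContinuousLinearMap.smul_apply, hDS, hDQ, ContinuousLinearMap.sum_apply,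
          smul_eq_mul, Finset.mul_sum]
      calc ∑ i, DF x (Pi.single i 1) i
          = ∑ i, (u x i * (∑ j, e j * (D x j (Pi.single i 1)))
              + S x * (D x i (Pi.single i 1))
              + (1/2 * e i) * (∑ j, (u x j * (D x j (Pi.single i 1))
                  + u x j * (D x j (Pi.single i 1))))) :=
            Finset.sum_congr rfl fun i _ => expand i
        _ = (∑ i, ∑ j, (pd3 u i j x + pd3 u j i x) * u x j * e i)
              + (∑ j, pd3 u j j x) * (∑ i, u x i * e i) := by
            have := aux_alg (fun a b => D x a (Pi.single b 1)) (u x) e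
            simp only [hS]
            rw [this]
            rfl
    · rw [Set.indicator_of_notMem hx]
      have hGx : G' x = 0 := if_neg hx
      rw [hGx]
      simp
  -- choose a big box
  obtain ⟨r₀, hr₀⟩ := hΩb.closure.subset_closedBall 0
  set R : ℝ := |r₀| + 1 with hR
  have hR0 : 0 < R := by positivity
  set a : Fin (n+1) → ℝ := fun _ => -R with ha
  set b : Fin (n+1) → ℝ := fun _ => R with hb2
  have hab : a ≤ b := fun i => by rw [ha, hb2]; simp; linarith
  have hclos_norm : ∀ z ∈ closure Ω, ‖z‖ ≤ |r₀| := by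
    intro z hz
    have := hr₀ hz
    rw [Metric.mem_closedBall, dist_zero_right] at this
    exact this.trans (le_abs_self _)
  have hΩsub : Ω ⊆ Set.Icc a b := by
    intro z hz
    have hn := hclos_norm z (subset_closure hz)
    constructor <;> intro i
    · rw [ha]
      have := (abs_le.1 ((norm_le_pi_norm z i).trans hn)).1
      simpa [hR] using by linarith
    · rw [hb2]
      have := (abs_le.1 ((norm_le_pi_norm z i).trans hn)).2
      simpa [hR] using by linarith
  have hface : ∀ (i : Fin (n+1)) (c : ℝ), |c| = R → ∀ z : Fin n → ℝ,
      G (Fin.insertNth i c z) = 0 := by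
    intro i c hcR z
    have hnot : Fin.insertNth i c z ∉ Ω := by
      intro hmem
      have h1 := (norm_le_pi_norm (Fin.insertNth i c z) i).trans
        (hclos_norm _ (subset_closure hmem))
      rw [Fin.insertNth_apply_same] at h1
      have : R ≤ |r₀| := by rw [← hcR]; simpa using h1
      rw [hR] at this
      linarith
    exact if_neg hnot
  -- continuity and boundedness of the divergence integrand on Ω
  have hfc : ∀ i, ContinuousOn (fun x => fderiv ℝ (fun z => u z i) x) Ω :=
    fun i => ((hu i).mono subset_closure).continuousOn_fderiv_of_isOpen hΩo le_rfl
  have hpd : ∀ i j, ContinuousOn (fun x => pd3 u i j x) Ω := fun i j =>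
    (hfc i).clm_apply continuousOn_const
  have huc : ∀ i, ContinuousOn (fun x => u x i) Ω :=
    fun i => ((hu i).continuousOn).mono subset_closure
  have hgcont : ContinuousOn g Ω := by
    rw [hgdef]
    refine ContinuousOn.add ?_ (ContinuousOn.mul ?_ ?_)
    · refine continuousOn_finset_sum _ fun i _ => continuousOn_finset_sum _ fun j _ => ?_
      exact (((hpd i j).add (hpd j i)).mul (huc j)).mul continuousOn_const
    · exact continuousOn_finset_sum _ fun j _ => hpd j j
    · exact continuousOn_finset_sum _ fun i _ => (huc i).mul continuousOn_const
  have hpdb : ∀ (i j : Fin (n+1)), ∀ x ∈ Ω, |pd3 u i j x| ≤ M := by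
    intro i j x hx
    have h1 : |pd3 u i j x| = ‖D x i (Pi.single j 1)‖ := rfl
    rw [h1]
    calc ‖D x i (Pi.single j 1)‖ ≤ ‖D x i‖ * ‖(Pi.single j 1 : Fin (n+1) → ℝ)‖ :=
          (D x i).le_opNorm _
      _ ≤ M * 1 := by
          rw [Pi.norm_single, norm_one]
          exact mul_le_mul_of_nonneg_right (hMb i x hx) zero_le_one
      _ = M := mul_one M
  set B : ℝ := ∑ j, |e j| with hB
  have hB0 : 0 ≤ B := Finset.sum_nonneg fun j _ => abs_nonneg _
  have heB : ∀ i, |e i| ≤ B := fun i =>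
    Finset.single_le_sum (f := fun j => |e j|) (fun j _ => abs_nonneg _) (Finset.mem_univ i)
  set C : ℝ := (n+1)^2 * (2*M*(Bu*B)) + ((n+1)*M)*((n+1)*(Bu*B)) with hC
  have hC0 : 0 ≤ C := by positivity
  have hgb : ∀ x ∈ Ω, |g x| ≤ C := by
    intro x hx
    have hxcl : x ∈ closure Ω := subset_closure hx
    have h1 : |∑ i, ∑ j, (pd3 u i j x + pd3 u j i x) * u x j * e i|
        ≤ (n+1)^2 * (2*M*(Bu*B)) := by
      calc |∑ i, ∑ j, (pd3 u i j x + pd3 u j i x) * u x j * e i|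
          ≤ ∑ i, |∑ j, (pd3 u i j x + pd3 u j i x) * u x j * e i| :=
            Finset.abs_sum_le_sum_abs _ _
        _ ≤ ∑ i, ∑ j, |(pd3 u i j x + pd3 u j i x) * u x j * e i| :=
            Finset.sum_le_sum fun i _ => Finset.abs_sum_le_sum_abs _ _
        _ ≤ ∑ i : Fin (n+1), ∑ j : Fin (n+1), 2*M*(Bu*B) := by
            refine Finset.sum_le_sum fun i _ => Finset.sum_le_sum fun j _ => ?_
            rw [abs_mul, abs_mul]
            have h2 : |pd3 u i j x + pd3 u j i x| ≤ 2 * M := by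
              calc |pd3 u i j x + pd3 u j i x| ≤ |pd3 u i j x| + |pd3 u j i x| := abs_add_le _ _
                _ ≤ M + M := add_le_add (hpdb i j x hx) (hpdb j i x hx)
                _ = 2 * M := by ring
            calc |pd3 u i j x + pd3 u j i x| * |u x j| * |e i|
                ≤ (2*M) * Bu * B := by
                  refine mul_le_mul (mul_le_mul h2 (hBu x hxcl j) (abs_nonneg _)
                    (by positivity)) (heB i) (abs_nonneg _) (by positivity)
              _ = 2*M*(Bu*B) := by ring
        _ = (n+1)^2 * (2*M*(Bu*B)) := by
            simp [Finset.sum_const, Finset.card_univ]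
            ring
    have h2 : |(∑ j, pd3 u j j x) * (∑ i, u x i * e i)| ≤ ((n+1)*M)*((n+1)*(Bu*B)) := by
      rw [abs_mul]
      refine mul_le_mul ?_ ?_ (abs_nonneg _) (by positivity)
      · calc |∑ j, pd3 u j j x| ≤ ∑ j, |pd3 u j j x| := Finset.abs_sum_le_sum_abs _ _
          _ ≤ ∑ j : Fin (n+1), M := Finset.sum_le_sum fun j _ => hpdb j j x hx
          _ = (n+1) * M := by simp [Finset.sum_const, Finset.card_univ]
      · calc |∑ i, u x i * e i| ≤ ∑ i, |u x i * e i| := Finset.abs_sum_le_sum_abs _ _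
          _ ≤ ∑ i : Fin (n+1), Bu * B := by
              refine Finset.sum_le_sum fun i _ => ?_
              rw [abs_mul]
              exact mul_le_mul (hBu x hxcl i) (heB i) (abs_nonneg _) hBu0
          _ = (n+1) * (Bu*B) := by simp [Finset.sum_const, Finset.card_univ]
    calc |g x| ≤ |∑ i, ∑ j, (pd3 u i j x + pd3 u j i x) * u x j * e i|
          + |(∑ j, pd3 u j j x) * (∑ i, u x i * e i)| := by rw [hgdef]; exact abs_add_le _ _
      _ ≤ C := by rw [hC]; exact add_le_add h1 h2
  -- integrability of the divergence
  have hfun : (fun x => ∑ i, G' x (Pi.single i 1) i) = Set.indicator Ω g := funext hdivG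
  have Hi : IntegrableOn (fun x => ∑ i, G' x (Pi.single i 1) i) (Set.Icc a b) volume := by
    rw [hfun]
    apply Measure.integrableOn_of_bounded (M := C)
    · exact (isCompact_Icc.measure_lt_top).ne
    · exact (aestronglyMeasurable_indicator_iff hΩo.measurableSet).2
        (hgcont.aestronglyMeasurable hΩo.measurableSet)
    · refine Filter.Eventually.of_forall fun x => ?_
      by_cases hx : x ∈ Ω
      · rw [Set.indicator_of_mem hx]
        exact hgb x hx
      · rw [Set.indicator_of_notMem hx]
        simpa using hC0
  -- apply the divergence theorem
  have hdthm := integral_divergence_of_hasFDerivAt_off_countable a b hab G G' ∅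
    Set.countable_empty hGc.continuousOn (fun x _ => hGd x) Hi
  have hchain : emacC3 Ω u u (fun _ => e) = ∫ x in Set.Icc a b, ∑ i, G' x (Pi.single i 1) i := by
    calc emacC3 Ω u u (fun _ => e) = ∫ x in Ω, g x := rfl
      _ = ∫ x in Set.Icc a b ∩ Ω, g x := by rw [Set.inter_eq_self_of_subset_right hΩsub]
      _ = ∫ x in Set.Icc a b, Set.indicator Ω g x :=
          (setIntegral_indicator hΩo.measurableSet).symm
      _ = ∫ x in Set.Icc a b, ∑ i, G' x (Pi.single i 1) i := by rw [← hfun]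
  rw [hchain, hdthm]
  refine Finset.sum_eq_zero fun i _ => ?_
  have hbi : |b i| = R := by rw [hb2]; exact abs_of_pos hR0
  have hai : |a i| = R := by rw [ha]; simp [abs_of_pos hR0]
  have h1 : ∀ z : Fin n → ℝ, G (i.insertNth (b i) z) i = 0 := fun z => by
    rw [hface i (b i) hbi z]; rfl
  have h2 : ∀ z : Fin n → ℝ, G (i.insertNth (a i) z) i = 0 := fun z => by
    rw [hface i (a i) hai z]; rfl
  simp [h1, h2]
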